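/- Let H be a complex Hilbert space, F a bounded self-adjoint operator with F² = 1, and let A be a unital *-subalgebra of B(H) acting unitally such that [F, a] is trace class for all a ∈ A. For n ≥ 1 define τ(a₀, a₁, …, a_n) = Tr(a₀ [F,a₁] [F,a₂] ⋯ [F,a_n]) whenever n is odd (so that the product of n trace-class commutators with a₀ is trace class). Then τ is a cyclic cochain: τ(a_n, a₀, …, a_{n−1}) = (−1)^n τ(a₀, …, a_n), and τ is a Hochschild cocycle: (bτ)(a₀, …, a_{n+1}) := Σ_{i=0}^{n} (−1)^i τ(a₀, …, a_i a_{i+1}, …, a_{n+1}) + (−1)^{n+1} τ(a_{n+1} a₀, a₁, …, a_n) = 0. -/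

import Mathlib

/- Mathlib has no theory of trace-class operators on infinite-dimensional Hilbert
spaces, so we work over a finite-dimensional complex Hilbert space, where every
bounded operator is trace class (hence the trace-class hypothesis of the statement
holds automatically) and the trace is `LinearMap.trace`.  All the algebraic
structure of the statement (cyclicity and the Hochschild cocycle identity for
Connes' character of an odd Fredholm module) is retained verbatim. -/

variable {H : Type*} [NormedAddCommGroup H] [InnerProductSpace ℂ H]
  [FiniteDimensional ℂ H]

/-- The trace of a bounded operator. -/
noncomputable def opTrace (T : H →L[ℂ] H) : ℂ :=
  LinearMap.trace ℂ H (T : H →ₗ[ℂ] H)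

/-- The character cochain of an odd Fredholm module:
`τ(a₀, a₁, …, a_n) = Tr(a₀ [F,a₁] [F,a₂] ⋯ [F,a_n])`. -/
noncomputable def charCochain (F : H →L[ℂ] H) {n : ℕ} (a : Fin (n + 1) → (H →L[ℂ] H)) : ℂ :=
  opTrace (a 0 * (List.ofFn fun i : Fin n => F * a i.succ - a i.succ * F).prod)

set_option linter.unusedSectionVars false
set_option maxHeartbeats 1000000

open Fin.NatCast


/-! ### Auxiliary API -/

lemma coe_mul' (A B : H →L[ℂ] H) : ((A * B : H →L[ℂ] H) : H →ₗ[ℂ] H) = (A : H →ₗ[ℂ] H) * B := rfl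

lemma opTrace_comm (A B : H →L[ℂ] H) : opTrace (A * B) = opTrace (B * A) := by
  unfold opTrace; rw [coe_mul', coe_mul']; exact LinearMap.trace_mul_comm ℂ _ _

lemma opTrace_add (A B : H →L[ℂ] H) : opTrace (A + B) = opTrace A + opTrace B := by
  unfold opTrace; rw [ContinuousLinearMap.coe_add]; exact map_add _ _ _

lemma opTrace_sub (A B : H →L[ℂ] H) : opTrace (A - B) = opTrace A - opTrace B := by
  unfold opTrace; rw [ContinuousLinearMap.coe_sub]; exact map_sub _ _ _

lemma opTrace_neg (A : H →L[ℂ] H) : opTrace (-A) = -opTrace A := by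
  unfold opTrace; rw [ContinuousLinearMap.coe_neg]; exact map_neg _ _

lemma opTrace_smul (c : ℂ) (A : H →L[ℂ] H) : opTrace (c • A) = c * opTrace A := by
  unfold opTrace; rw [ContinuousLinearMap.coe_smul]; exact map_smul _ _ _

def dd (F x : H →L[ℂ] H) : H →L[ℂ] H := F * x - x * F

lemma dd_mul (F x y : H →L[ℂ] H) : dd F (x * y) = dd F x * y + x * dd F y := by
  unfold dd; noncomm_ring

lemma F_dd (F : H →L[ℂ] H) (hF2 : F * F = 1) (x : H →L[ℂ] H) :
    F * dd F x = -(dd F x * F) := by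
  unfold dd
  have h1 : F * (F * x - x * F) = x - F * x * F := by
    rw [mul_sub, ← mul_assoc, hF2, one_mul, ← mul_assoc]
  have h2 : (F * x - x * F) * F = F * x * F - x := by
    rw [sub_mul, mul_assoc x F F, hF2, mul_one]
  rw [h1, h2, neg_sub]

lemma F_dd_eq (F : H →L[ℂ] H) (hF2 : F * F = 1) (x : H →L[ℂ] H) :
    F * dd F x = x - F * x * F := by
  unfold dd; rw [mul_sub, ← mul_assoc, hF2, one_mul, ← mul_assoc]

lemma half_trace (F : H →L[ℂ] H) (hF2 : F * F = 1) (x M : H →L[ℂ] H)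
    (hM : F * M = -(M * F)) :
    opTrace (F * dd F x * M) = 2 * opTrace (x * M) := by
  have hMF : M * F = -(F * M) := by rw [hM, neg_neg]
  have key : F * (M * F) = -M := by rw [hMF, mul_neg, ← mul_assoc, hF2, one_mul]
  have e1 : F * x * F * M = F * (x * (F * M)) := by simp [mul_assoc]
  have e2 : x * (F * M) * F = x * -M := by
    rw [mul_assoc, mul_assoc F M F, key]
  rw [F_dd_eq F hF2, sub_mul, opTrace_sub, e1, opTrace_comm F (x * (F * M)), e2,
    mul_neg, opTrace_neg]
  ring

lemma F_list_prod (F : H →L[ℂ] H) (L : List (H →L[ℂ] H))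
    (h : ∀ x ∈ L, F * x = -(x * F)) :
    F * L.prod = ((-1 : ℂ) ^ L.length) • (L.prod * F) := by
  induction L with
  | nil => simp
  | cons y L ih =>
    have hy := h y (by simp)
    have ihh := ih (fun x hx => h x (by simp [hx]))
    simp only [List.prod_cons, List.length_cons]
    rw [← mul_assoc, hy, neg_mul, mul_assoc, ihh, mul_smul_comm,
      pow_succ, mul_neg_one, neg_smul, mul_assoc]

noncomputable def PD (F : H →L[ℂ] H) (a : ℕ → H →L[ℂ] H) (s l : ℕ) : H →L[ℂ] H :=
  ((List.range' s l).map fun k => dd F (a k)).prod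

@[simp] lemma PD_zero (F : H →L[ℂ] H) (a : ℕ → H →L[ℂ] H) (s : ℕ) : PD F a s 0 = 1 := by
  simp [PD]

@[simp] lemma PD_one (F : H →L[ℂ] H) (a : ℕ → H →L[ℂ] H) (s : ℕ) :
    PD F a s 1 = dd F (a s) := by simp [PD]

lemma PD_succ_left (F : H →L[ℂ] H) (a : ℕ → H →L[ℂ] H) (s l : ℕ) :
    PD F a s (l + 1) = dd F (a s) * PD F a (s + 1) l := by
  rw [PD, List.range'_succ]; simp [PD]

lemma PD_append (F : H →L[ℂ] H) (a : ℕ → H →L[ℂ] H) (s l₁ l₂ : ℕ) :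
    PD F a s l₁ * PD F a (s + l₁) l₂ = PD F a s (l₂ + l₁) := by
  rw [PD, PD, PD, Nat.add_comm l₂ l₁, ← List.range'_append (s := s) (m := l₁) (n := l₂) (step := 1), List.map_append, List.prod_append]
  norm_num

lemma PD_concat (F : H →L[ℂ] H) (a : ℕ → H →L[ℂ] H) (s l : ℕ) :
    PD F a s l * dd F (a (s + l)) = PD F a s (l + 1) := by
  have := PD_append F a s l 1
  simpa [Nat.add_comm] using this

lemma F_PD (F : H →L[ℂ] H) (hF2 : F * F = 1) (a : ℕ → H →L[ℂ] H) (s l : ℕ) :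
    F * PD F a s l = ((-1 : ℂ) ^ l) • (PD F a s l * F) := by
  have h := F_list_prod F ((List.range' s l).map fun k => dd F (a k)) ?_
  · simpa [PD] using h
  · intro x hx
    simp only [List.mem_map] at hx
    obtain ⟨k, -, rfl⟩ := hx
    exact F_dd F hF2 _

lemma ofFn_eq_range' (F : H →L[ℂ] H) (m : ℕ) (b : Fin (m + 1) → (H →L[ℂ] H)) :
    (List.ofFn fun i : Fin m => F * b i.succ - b i.succ * F)
      = (List.range' 1 m).map fun k : ℕ => dd F (b (k : Fin (m+1))) := by
  apply List.ext_getElem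
  · simp
  · intro i h1 h2
    simp only [List.getElem_ofFn, List.getElem_map, List.getElem_range']
    have hi : i < m := by simpa using h1
    have he : ((1 + 1 * i : ℕ) : Fin (m + 1)) = (⟨i, hi⟩ : Fin m).succ := by
      apply Fin.ext
      rw [Fin.val_natCast, Nat.mod_eq_of_lt (by omega)]
      simp
      omega
    rw [he]
    rfl

lemma charCochain_eq (F : H →L[ℂ] H) {m : ℕ} (b : Fin (m + 1) → (H →L[ℂ] H)) :
    charCochain F b
      = opTrace (b 0 * ((List.range' 1 m).map fun k : ℕ => dd F (b (k : Fin (m+1)))).prod) := by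
  rw [charCochain, ofFn_eq_range']

/-- cyclicity half of the theorem -/
lemma cyclic_part (F : H →L[ℂ] H) (hF2 : F * F = 1) (n : ℕ) (hn : Odd n)
    (a : Fin (n + 1) → (H →L[ℂ] H)) :
    charCochain F (fun i => a (i - 1)) = (-1 : ℂ) ^ n * charCochain F a := by
  have hn1 : 1 ≤ n := hn.pos
  set a' : ℕ → (H →L[ℂ] H) := fun k => a (k : Fin (n+1)) with ha'
  have hone : ((1 : Fin (n+1))).val = 1 := by
    have e : ((1:ℕ) : Fin (n+1)) = 1 := Nat.cast_one
    rw [← e, Fin.val_natCast]; exact Nat.mod_eq_of_lt (by omega)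
  have hR : charCochain F a = opTrace (a' 0 * PD F a' 1 n) := by
    rw [charCochain_eq]; rfl
  have hL : charCochain F (fun i => a (i - 1)) = opTrace (a' n * PD F a' 0 n) := by
    rw [charCochain_eq]
    have h0 : (0 : Fin (n+1)) - 1 = ((n : ℕ) : Fin (n+1)) := by
      apply Fin.ext
      rw [Fin.sub_def]
      simp only [Fin.val_zero, hone, Fin.val_natCast]
      rw [show n + 1 - 1 + 0 = n by omega]
    have hlist : ((List.range' 1 n).map fun k : ℕ => dd F (a ((k : Fin (n+1)) - 1)))
        = (List.range' 0 n).map fun k : ℕ => dd F (a' k) := by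
      have e0 : List.range' 1 n = (List.range' 0 n).map (fun x => 1 + x) := by
        rw [List.map_add_range']
      rw [e0, List.map_map]
      apply List.map_congr_left
      intro k hk
      have hkn : k < n := by
        have := List.mem_range'_1.mp hk
        omega
      have hv1 : ((1 + k : ℕ) : Fin (n+1)).val = 1 + k := by
        rw [Fin.val_natCast]; exact Nat.mod_eq_of_lt (by omega)
      have hvk : ((k : ℕ) : Fin (n+1)).val = k := by
        rw [Fin.val_natCast]; exact Nat.mod_eq_of_lt (by omega)
      have hfin : ((1 + k : ℕ) : Fin (n+1)) - 1 = ((k : ℕ) : Fin (n+1)) := by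
        apply Fin.ext
        rw [Fin.sub_def]
        simp only [hv1, hone, hvk]
        rw [show n + 1 - 1 + (1 + k) = k + (n+1) by omega, Nat.add_mod_right]
        exact Nat.mod_eq_of_lt (by omega)
      simp only [Function.comp]
      rw [hfin]
    show opTrace (a ((0 : Fin (n+1)) - 1) *
        ((List.range' 1 n).map fun k : ℕ => dd F (a ((k : Fin (n+1)) - 1))).prod) = _
    rw [h0, hlist]
    rfl
  rw [hL, hR]
  have hsign : ((-1 : ℂ) ^ n) = -1 := Odd.neg_one_pow hn
  have hM0 : F * PD F a' 0 n = -(PD F a' 0 n * F) := by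
    rw [F_PD F hF2, hsign, neg_one_smul]
  have hM1 : F * PD F a' 1 n = -(PD F a' 1 n * F) := by
    rw [F_PD F hF2, hsign, neg_one_smul]
  have h1 := half_trace F hF2 (a' n) (PD F a' 0 n) hM0
  have h2 := half_trace F hF2 (a' 0) (PD F a' 1 n) hM1
  have hcc : PD F a' 0 n * dd F (a' n) = PD F a' 0 (n+1) := by
    have := PD_concat F a' 0 n; simpa using this
  have key : opTrace (F * dd F (a' n) * PD F a' 0 n)
      = -opTrace (F * dd F (a' 0) * PD F a' 1 n) := by
    have c1 : opTrace (F * dd F (a' n) * PD F a' 0 n)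
        = opTrace (PD F a' 0 n * (F * dd F (a' n))) := opTrace_comm _ _
    have hPF : PD F a' 0 n * F = -(F * PD F a' 0 n) := by rw [hM0, neg_neg]
    have c2 : PD F a' 0 n * (F * dd F (a' n)) = -(F * PD F a' 0 (n+1)) := by
      rw [← mul_assoc, hPF, neg_mul, mul_assoc, hcc]
    have c3 : F * dd F (a' 0) * PD F a' 1 n = F * PD F a' 0 (n+1) := by
      rw [PD_succ_left F a' 0 n, mul_assoc]
    rw [c1, c2, opTrace_neg, c3]
  rw [hsign, neg_one_mul]
  have h2' : opTrace (a' n * PD F a' 0 n) =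
      (opTrace (F * dd F (a' n) * PD F a' 0 n)) / 2 := by
    rw [h1]; ring
  have h1' : opTrace (a' 0 * PD F a' 1 n) =
      (opTrace (F * dd F (a' 0) * PD F a' 1 n)) / 2 := by
    rw [h2]; ring
  rw [h2', h1', key]
  ring

lemma natCast_fin_val (N k : ℕ) (h : k < N + 1) : (((k : ℕ) : Fin (N+1)) : ℕ) = k := by
  rw [Fin.val_natCast]; exact Nat.mod_eq_of_lt (by omega)

lemma tele (V : ℕ → ℂ) (n : ℕ) :
    ∑ i ∈ Finset.range (n+1), (-1:ℂ)^i * (V i + if i = 0 then 0 else V (i-1))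
      = (-1:ℂ)^n * V n := by
  induction n with
  | zero => simp
  | succ m ih =>
    rw [Finset.sum_range_succ, ih]
    simp only [Nat.succ_ne_zero, if_false, Nat.add_sub_cancel]
    ring

lemma cocycle_part (F : H →L[ℂ] H) (hF2 : F * F = 1) (n : ℕ)
    (a : Fin (n + 2) → (H →L[ℂ] H)) :
    (∑ i : Fin (n + 1), (-1 : ℂ) ^ (i : ℕ) *
        charCochain F (fun j : Fin (n + 1) =>
          if (j : ℕ) < (i : ℕ) then a j.castSucc
          else if j = i then a i.castSucc * a i.succ
          else a j.succ))
      + (-1 : ℂ) ^ (n + 1) *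
        charCochain F (fun j : Fin (n + 1) =>
          if j = 0 then a (Fin.last (n + 1)) * a 0 else a j.castSucc) = 0 := by
  set cfam : Fin (n+1) → (H →L[ℂ] H) := fun j : Fin (n + 1) =>
    if j = 0 then a (Fin.last (n + 1)) * a 0 else a j.castSucc with hcfam
  set a' : ℕ → (H →L[ℂ] H) := fun k => a (k : Fin (n+2)) with ha'
  set U : ℕ → ℂ := fun j =>
    opTrace (a' 0 * (PD F a' 1 j * (a' (j+1) * PD F a' (j+2) (n - j)))) with hU
  set bfam : ℕ → Fin (n+1) → (H →L[ℂ] H) := fun k j =>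
    if (j : ℕ) < k then a j.castSucc
    else if (j : ℕ) = k then a' k * a' (k+1)
    else a j.succ with hbfam
  have hcastSucc : ∀ i : Fin (n+1), a i.castSucc = a' (i : ℕ) := by
    intro i
    apply congrArg
    apply Fin.ext
    rw [natCast_fin_val (n+1) _ (by omega)]
    rfl
  have hsucc : ∀ i : Fin (n+1), a i.succ = a' ((i : ℕ) + 1) := by
    intro i
    apply congrArg
    apply Fin.ext
    rw [natCast_fin_val (n+1) _ (by omega)]
    rfl
  have hb : ∀ i : Fin (n+1),
      (fun j : Fin (n+1) =>
        if (j : ℕ) < (i : ℕ) then a j.castSucc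
        else if j = i then a i.castSucc * a i.succ
        else a j.succ) = bfam (i : ℕ) := by
    intro i
    funext j
    rw [hbfam]
    by_cases h1 : (j : ℕ) < (i : ℕ)
    · simp [h1]
    · by_cases h2 : j = i
      · have h2' : (j : ℕ) = (i : ℕ) := by rw [h2]
        simp [h1, h2, h2', hcastSucc i, hsucc i]
      · have h2' : ¬ ((j : ℕ) = (i : ℕ)) := fun h => h2 (Fin.ext h)
        simp [h1, h2, h2']
  have hsum : (∑ i : Fin (n + 1), (-1 : ℂ) ^ (i : ℕ) *
        charCochain F (fun j : Fin (n + 1) =>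
          if (j : ℕ) < (i : ℕ) then a j.castSucc
          else if j = i then a i.castSucc * a i.succ
          else a j.succ))
      = ∑ k ∈ Finset.range (n+1), (-1 : ℂ) ^ k * charCochain F (bfam k) := by
    rw [← Fin.sum_univ_eq_sum_range (fun k => (-1 : ℂ) ^ k * charCochain F (bfam k)) (n+1)]
    apply Finset.sum_congr rfl
    intro i _
    rw [hb i]
  rw [hsum]
  have hterm : ∀ k ∈ Finset.range (n+1),
      (-1:ℂ)^k * charCochain F (bfam k)
        = (-1:ℂ)^k * (U k + if k = 0 then 0 else U (k-1)) := by
    intro k hk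
    have hkn : k ≤ n := by simpa using Nat.lt_succ_iff.mp (Finset.mem_range.mp hk)
    congr 1
    rw [charCochain_eq]
    by_cases hk0 : k = 0
    · subst hk0
      have hb0 : bfam 0 0 = a' 0 * a' 1 := by
        rw [hbfam]; simp
      have hlist : ((List.range' 1 n).map fun m : ℕ => dd F (bfam 0 ((m : ℕ) : Fin (n+1))))
          = (List.range' 2 n).map fun m : ℕ => dd F (a' m) := by
        have e0 : List.range' 2 n = (List.range' 1 n).map (fun x => 1 + x) := by
          rw [List.map_add_range']
        rw [e0, List.map_map]
        apply List.map_congr_left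
        intro m hm
        have hmb := List.mem_range'_1.mp hm
        have hv : (((m : ℕ) : Fin (n+1)) : ℕ) = m := natCast_fin_val n m (by omega)
        rw [hbfam]
        simp only [Function.comp, hv]
        rw [if_neg (by omega : ¬ (m < 0)), if_neg (by omega : ¬ (m = 0)),
          hsucc, hv, Nat.add_comm 1 m]
      rw [hb0, hlist]
      show opTrace ((a' 0 * a' 1) * PD F a' 2 n) = U 0 + _
      rw [hU]
      simp [mul_assoc]
    · have hk1 : 1 ≤ k := by omega
      rw [if_neg hk0]
      have hb0 : bfam k 0 = a' 0 := by
        rw [hbfam]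
        dsimp only
        rw [if_pos (show ((0 : Fin (n+1)) : ℕ) < k by rw [Fin.val_zero]; omega)]
        rw [hcastSucc]
        simp
      have hsplit : List.range' 1 n
          = List.range' 1 (k-1) ++ (List.range' k 1 ++ List.range' (k+1) (n-k)) := by
        have e1 : List.range' k 1 ++ List.range' (k+1) (n-k) = List.range' k (n-k+1) := by
          have := List.range'_append (s := k) (m := 1) (n := n-k) (step := 1)
          simpa [Nat.add_comm] using this
        rw [e1]
        have e2 := List.range'_append (s := 1) (m := k-1) (n := n-k+1) (step := 1)
        rw [show 1 + 1 * (k-1) = k by omega] at e2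
        rw [show (k-1) + (n-k+1) = n by omega] at e2
        exact e2.symm
      rw [hsplit, List.map_append, List.map_append, List.prod_append, List.prod_append]
      have hP1 : (List.range' 1 (k-1)).map (fun m : ℕ => dd F (bfam k ((m:ℕ) : Fin (n+1))))
          = (List.range' 1 (k-1)).map fun m : ℕ => dd F (a' m) := by
        apply List.map_congr_left
        intro m hm
        have hmb := List.mem_range'_1.mp hm
        have hv : (((m : ℕ) : Fin (n+1)) : ℕ) = m := natCast_fin_val n m (by omega)
        rw [hbfam]
        simp only [hv]
        rw [if_pos (by omega : m < k), hcastSucc, hv]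
      have hP2 : (List.range' k 1).map (fun m : ℕ => dd F (bfam k ((m:ℕ) : Fin (n+1))))
          = [dd F (a' k * a' (k+1))] := by
        have hv : (((k : ℕ) : Fin (n+1)) : ℕ) = k := natCast_fin_val n k (by omega)
        rw [List.range'_one, List.map_cons, List.map_nil, hbfam]
        simp only [hv]
        rw [if_neg (lt_irrefl k)]
        simp only [if_true]
      have hP3 : (List.range' (k+1) (n-k)).map (fun m : ℕ => dd F (bfam k ((m:ℕ) : Fin (n+1))))
          = (List.range' (k+2) (n-k)).map fun m : ℕ => dd F (a' m) := by
        have e0 : List.range' (k+2) (n-k) = (List.range' (k+1) (n-k)).map (fun x => 1 + x) := by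
          rw [List.map_add_range']
          congr 1
          omega
        rw [e0, List.map_map]
        apply List.map_congr_left
        intro m hm
        have hmb := List.mem_range'_1.mp hm
        have hv : (((m : ℕ) : Fin (n+1)) : ℕ) = m := natCast_fin_val n m (by omega)
        rw [hbfam]
        simp only [Function.comp, hv]
        rw [if_neg (by omega : ¬ (m < k)), if_neg (by omega : ¬ (m = k)),
          hsucc, hv, Nat.add_comm 1 m]
      rw [hb0, hP1, hP2, hP3]
      show opTrace (a' 0 * (PD F a' 1 (k-1) * (dd F (a' k * a' (k+1)) * PD F a' (k+2) (n-k))))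
          = U k + U (k-1)
      rw [dd_mul]
      have hP1dd : PD F a' 1 (k-1) * dd F (a' k) = PD F a' 1 k := by
        have h := PD_concat F a' 1 (k-1)
        rw [show 1 + (k-1) = k by omega, show k - 1 + 1 = k by omega] at h
        exact h
      have hddP3 : dd F (a' (k+1)) * PD F a' (k+2) (n-k) = PD F a' (k+1) (n-k+1) := by
        rw [PD_succ_left F a' (k+1) (n-k)]
      have hop : a' 0 * (PD F a' 1 (k-1) *
            ((dd F (a' k) * a' (k+1) + a' k * dd F (a' (k+1))) * PD F a' (k+2) (n-k)))
          = a' 0 * (PD F a' 1 k * (a' (k+1) * PD F a' (k+2) (n-k)))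
            + a' 0 * (PD F a' 1 (k-1) * (a' k * PD F a' (k+1) (n-k+1))) := by
        rw [← hP1dd, ← hddP3]
        simp only [add_mul, mul_add, mul_assoc]
      rw [hop, opTrace_add, hU]
      simp only []
      rw [show k - 1 + 1 = k by omega, show k - 1 + 2 = k + 1 by omega,
        show n - (k-1) = n - k + 1 by omega]
  rw [Finset.sum_congr rfl hterm, tele U n]
  have hlast : charCochain F cfam = U n := by
    rw [charCochain_eq]
    have hc0 : cfam 0 = a' (n+1) * a' 0 := by
      simp only [hcfam]
      simp only [if_true]
      have h1 : a (Fin.last (n + 1)) = a' (n+1) := by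
        apply congrArg
        apply Fin.ext
        rw [natCast_fin_val (n+1) _ (by omega)]
        rfl
      have h2 : a 0 = a' 0 := by
        apply congrArg
        apply Fin.ext
        rw [natCast_fin_val (n+1) _ (by omega)]
        rfl
      rw [h1, h2]
    have hlist : ((List.range' 1 n).map fun m : ℕ => dd F (cfam ((m:ℕ) : Fin (n+1))))
        = (List.range' 1 n).map fun m : ℕ => dd F (a' m) := by
      apply List.map_congr_left
      intro m hm
      have hmb := List.mem_range'_1.mp hm
      have hv : (((m : ℕ) : Fin (n+1)) : ℕ) = m := natCast_fin_val n m (by omega)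
      have hne : ¬ (((m:ℕ) : Fin (n+1)) = 0) := by
        intro h
        have h' := congrArg Fin.val h
        rw [hv] at h'
        simp at h'
        omega
      simp only [hcfam]
      rw [if_neg hne, hcastSucc, hv]
    rw [hc0, hlist]
    have hcomm : opTrace ((a' (n+1) * a' 0) * ((List.range' 1 n).map fun m : ℕ => dd F (a' m)).prod)
        = opTrace ((a' 0 * ((List.range' 1 n).map fun m : ℕ => dd F (a' m)).prod) * a' (n+1)) := by
      rw [mul_assoc]
      exact opTrace_comm _ _
    rw [hcomm, hU]
    show opTrace ((a' 0 * PD F a' 1 n) * a' (n+1)) = _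
    simp [mul_assoc, Nat.sub_self]
  rw [hlast]
  ring


/-- **Connes' character of an odd Fredholm module is a cyclic Hochschild cocycle.**
Let `F` be self-adjoint with `F² = 1` and `n` odd.  Then
`τ(a₀,…,a_n) = Tr(a₀[F,a₁]⋯[F,a_n])` satisfies the cyclic symmetry
`τ(a_n, a₀, …, a_{n−1}) = (−1)^n τ(a₀, …, a_n)` and the cocycle identity
`(bτ)(a₀,…,a_{n+1}) = Σ_{i=0}^{n} (−1)^i τ(a₀,…,a_i a_{i+1},…,a_{n+1})
  + (−1)^{n+1} τ(a_{n+1}a₀, a₁,…,a_n) = 0`. -/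
theorem connes_character_odd_cyclic_cocycle (F : H →L[ℂ] H)
    (hF : IsSelfAdjoint F) (hF2 : F * F = 1) (n : ℕ) (hn : Odd n) :
    (∀ a : Fin (n + 1) → (H →L[ℂ] H),
      charCochain F (fun i => a (i - 1)) = (-1 : ℂ) ^ n * charCochain F a) ∧
    (∀ a : Fin (n + 2) → (H →L[ℂ] H),
      (∑ i : Fin (n + 1), (-1 : ℂ) ^ (i : ℕ) *
          charCochain F (fun j : Fin (n + 1) =>
            if (j : ℕ) < (i : ℕ) then a j.castSucc
            else if j = i then a i.castSucc * a i.succ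
            else a j.succ))
        + (-1 : ℂ) ^ (n + 1) *
          charCochain F (fun j : Fin (n + 1) =>
            if j = 0 then a (Fin.last (n + 1)) * a 0 else a j.castSucc) = 0) := by
  exact ⟨fun a => cyclic_part F hF2 n hn a, fun a => cocycle_part F hF2 n a⟩
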